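/- Let G be an arbitrary simple complex algebraic group (not necessarily simply-connected). Every dominant integral weight λ with V(λ) ⊂ H•(G/B, ∧•𝒯_{G/B}) satisfies λ ≤ 2ρ and hence lies in the root lattice Q, so V(λ) is a representation of G; consequently, if Kostant's conjecture holds for the simply-connected cover, then for λ ∈ P⁺ one has V(λ) ⊂ H•(G/B, ∧•𝒯_{G/B}) if and only if λ ≤ 2ρ, with multiplicity at least m_λ. -/

import Mathlib

open scoped BigOperators

namespace KostantHH

/-- The integral weight lattice of a rank-`ℓ` simple, simply-connected group /
simple Lie algebra, written in fundamental-weight coordinates (so the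
fundamental weights `ϖᵢ` are the standard basis vectors, and pairing a weight
with the `i`-th simple coroot is taking its `i`-th coordinate). -/
abbrev P (ℓ : ℕ) := Fin ℓ → ℤ

/-- The group algebra `ℤ[P]` of the weight lattice. -/
abbrev R (ℓ : ℕ) := AddMonoidAlgebra ℤ (P ℓ)

/-- `e μ` is the basis element `e^μ` of `ℤ[P]`. -/
noncomputable def e {ℓ : ℕ} (μ : P ℓ) : R ℓ := AddMonoidAlgebra.single μ 1

/-- The Weyl vector `ρ = ϖ₁ + ⋯ + ϖ_ℓ`, i.e. `(1,…,1)` in fundamental-weight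
coordinates. -/
def ρ {ℓ : ℕ} : P ℓ := fun _ => 1

/-- A weight is dominant iff all its fundamental-weight coordinates (= pairings
with the simple coroots) are nonnegative. -/
def dominant {ℓ : ℕ} (lam : P ℓ) : Prop := ∀ i, 0 ≤ lam i

/-- The combinatorial root datum of a finite-dimensional simple complex Lie
algebra `𝔤` of rank `ℓ`: the simple roots `α i` (written in fundamental-weight
coordinates, so that `α i j = ⟨α i, αⱼ^∨⟩` is the Cartan matrix) and the set
`Φpos` of positive roots, whose sum is `2ρ`. -/
structure RootDatum (ℓ : ℕ) where
  α : Fin ℓ → P ℓ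
  cartan_diag : ∀ i, α i i = 2
  cartan_offdiag : ∀ i j, i ≠ j → α i j ≤ 0
  Φpos : Finset (P ℓ)
  simple_mem : ∀ i, α i ∈ Φpos
  pos_in_cone : ∀ β ∈ Φpos, ∃ c : Fin ℓ → ℕ, β = ∑ i, (c i : ℤ) • α i
  sum_pos_roots : ∑ β ∈ Φpos, β = (2 : ℤ) • ρ

/-- The dominance (Bruhat–Chevalley) order on weights: `λ ≤ μ` iff `μ - λ` is a
nonnegative integral combination of the simple roots (i.e. lies in `Q⁺`). -/
def domle {ℓ : ℕ} (S : RootDatum ℓ) (lam mu : P ℓ) : Prop :=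
  ∃ c : Fin ℓ → ℕ, mu - lam = ∑ i, (c i : ℤ) • S.α i

/-- The simple reflection `sᵢ(μ) = μ - ⟨μ, αᵢ^∨⟩ αᵢ`, as an automorphism of the
weight lattice. -/
def sRefl {ℓ : ℕ} (S : RootDatum ℓ) (i : Fin ℓ) : AddAut (P ℓ) where
  toFun μ := μ - μ i • S.α i
  invFun μ := μ - μ i • S.α i
  left_inv := by
    intro μ
    funext j
    simp only [Pi.sub_apply, Pi.smul_apply, smul_eq_mul]
    rw [S.cartan_diag i]
    ring
  right_inv := by
    intro μ
    funext j
    simp only [Pi.sub_apply, Pi.smul_apply, smul_eq_mul]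
    rw [S.cartan_diag i]
    ring
  map_add' := by
    intro μ ν
    funext j
    simp only [Pi.add_apply, Pi.sub_apply, Pi.smul_apply, smul_eq_mul]
    ring

/-- The Weyl group `W`, realized as the subgroup of automorphisms of the weight
lattice generated by the simple reflections. -/
def Wgrp {ℓ : ℕ} (S : RootDatum ℓ) : AddSubgroup (AddAut (P ℓ)) :=
  AddSubgroup.closure (Set.range (sRefl S))

/-- `w₀` is the longest element of the Weyl group: the (unique) element sending
all positive roots to negative roots. -/
def IsLongest {ℓ : ℕ} (S : RootDatum ℓ) (w₀ : AddAut (P ℓ)) : Prop :=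
  w₀ ∈ Wgrp S ∧ ∀ β ∈ S.Φpos, -(w₀ β) ∈ S.Φpos

/-- The action of a Weyl group element on the group algebra `ℤ[P]`,
`w(e^μ) := e^{w μ}`. -/
noncomputable def wact {ℓ : ℕ} (w : AddAut (P ℓ)) (f : R ℓ) : R ℓ :=
  AddMonoidAlgebra.mapDomain (⇑w) f

/-- The involution `◇` of `ℤ[P]`, determined by `◇(e^μ) = e^{-μ}`. -/
noncomputable def dia {ℓ : ℕ} (f : R ℓ) : R ℓ :=
  AddMonoidAlgebra.mapDomain (fun μ : P ℓ => -μ) f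

/-- The shifted (dot) action of the Weyl group on weights:
`w · λ = w(λ + ρ) - ρ`. -/
def dot {ℓ : ℕ} (w : AddAut (P ℓ)) (lam : P ℓ) : P ℓ := w (lam + ρ) - ρ

/-- `D` is the `i`-th Demazure operator `Dᵢ(f) = (f - e^{-αᵢ}·sᵢ(f))/(1 - e^{-αᵢ})`,
characterized by the equation `Dᵢ(f)·(1 - e^{-αᵢ}) = f - e^{-αᵢ}·sᵢ(f)`. -/
def IsDemazure {ℓ : ℕ} (S : RootDatum ℓ) (i : Fin ℓ) (D : Module.End ℤ (R ℓ)) : Prop :=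
  ∀ f : R ℓ, D f * (1 - e (-(S.α i))) = f - e (-(S.α i)) * wact (sRefl S i) f

/-- `Dw0` is the Demazure operator `D_{w₀} = D_{i₁} ∘ ⋯ ∘ D_{i_k}` attached to a
reduced word `w₀ = s_{i₁} ⋯ s_{i_k}` for the longest element `w₀` (a word for
`w₀` is reduced iff its length is `#Φ⁺ = ℓ(w₀)`). -/
def IsDw0 {ℓ : ℕ} (S : RootDatum ℓ) (w₀ : AddAut (P ℓ))
    (Dw0 : Module.End ℤ (R ℓ)) : Prop :=
  ∃ (word : List (Fin ℓ)) (D : Fin ℓ → Module.End ℤ (R ℓ)),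
    (∀ i, IsDemazure S i (D i)) ∧
    (word.map (sRefl S)).sum = w₀ ∧
    word.length = S.Φpos.card ∧
    Dw0 = (word.map D).prod

/-- The characters of the finite-dimensional irreducible highest weight
`𝔤`-modules `V(λ)`: `chV λ = ch V(λ) = ∑_μ (dim V(λ)_μ) e^μ ∈ ℤ[P]` for
dominant `λ`.  The recorded axioms express that `V(λ)` is a `𝔤`-module with
highest weight `λ` occurring with multiplicity one: weight multiplicities are
nonnegative, the coefficient of `e^λ` is `1`, all weights are `≤ λ` in
dominance order, and the character is Weyl-group invariant. -/
structure CharTheory {ℓ : ℕ} (S : RootDatum ℓ) where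
  chV : P ℓ → R ℓ
  chV_coeff_nonneg : ∀ lam μ, 0 ≤ (chV lam).coeff μ
  chV_self : ∀ lam, dominant lam → (chV lam).coeff lam = 1
  chV_support_le : ∀ lam, dominant lam → ∀ μ ∈ (chV lam).coeff.support, domle S μ lam
  chV_invariant : ∀ lam, dominant lam → ∀ i, wact (sRefl S i) (chV lam) = chV lam

/-- `g ∈ ℤ[P]` is the character of a finite-dimensional `𝔤`-module, i.e. a sum
of characters of irreducibles `V(μ)` with `μ` dominant. -/
def IsChar {ℓ : ℕ} {S : RootDatum ℓ} (T : CharTheory S) (g : R ℓ) : Prop :=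
  ∃ l : List (P ℓ), (∀ μ ∈ l, dominant μ) ∧ g = (l.map T.chV).sum

/-- The irreducible `V(λ)` occurs with multiplicity at least `m` in the
(semisimple, finite-dimensional) `𝔤`-module with character `g`. -/
def OccursWithMult {ℓ : ℕ} {S : RootDatum ℓ} (T : CharTheory S) (m : ℕ)
    (lam : P ℓ) (g : R ℓ) : Prop :=
  ∃ h : R ℓ, IsChar T h ∧ g = (m : ℤ) • T.chV lam + h

/-- The irreducible `V(λ)` occurs as a subrepresentation of the (semisimple,
finite-dimensional) `𝔤`-module with character `g`. -/
def Occurs {ℓ : ℕ} {S : RootDatum ℓ} (T : CharTheory S) (lam : P ℓ) (g : R ℓ) : Prop :=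
  OccursWithMult T 1 lam g


section
variable {ℓ : ℕ}

lemma e_apply (μ ν : P ℓ) : (e μ).coeff ν = if μ = ν then 1 else 0 := by
  rw [e, AddMonoidAlgebra.coeff_single, Finsupp.single_apply]

lemma e_mul (a b : P ℓ) : e a * e b = e (a + b) := by
  simp [e, AddMonoidAlgebra.single_mul_single]

lemma prod_e {γ : Type*} (s : Finset γ) (f : γ → P ℓ) :
    (∏ x ∈ s, e (f x)) = e (∑ x ∈ s, f x) := by
  classical
  induction s using Finset.cons_induction with
  | empty => simp [e]; rfl
  | cons a s ha ih =>
      rw [Finset.prod_cons, Finset.sum_cons, ih, e_mul]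

lemma wact_apply (w : AddAut (P ℓ)) (f : R ℓ) (μ : P ℓ) : (wact w f).coeff (w μ) = f.coeff μ := by
  rw [wact, AddMonoidAlgebra.coeff_mapDomain]; exact Finsupp.mapDomain_apply w.injective _ μ

lemma wact_one (f : R ℓ) : wact (0 : AddAut (P ℓ)) f = f := by
  have : ⇑(0 : AddAut (P ℓ)) = id := rfl
  rw [wact, this]
  apply AddMonoidAlgebra.coeff_injective
  rw [AddMonoidAlgebra.coeff_mapDomain, Finsupp.mapDomain_id]

lemma wact_wact (a b : AddAut (P ℓ)) (f : R ℓ) : wact a (wact b f) = wact (a + b) f := by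
  apply AddMonoidAlgebra.coeff_injective
  rw [wact, wact, wact, AddMonoidAlgebra.coeff_mapDomain, AddMonoidAlgebra.coeff_mapDomain,
    AddMonoidAlgebra.coeff_mapDomain, ← Finsupp.mapDomain_comp]
  congr 1

lemma wact_mul (w : AddAut (P ℓ)) (f g : R ℓ) : wact w (f * g) = wact w f * wact w g :=
  AddMonoidAlgebra.mapDomain_mul w f g

def fixSub (f : R ℓ) : AddSubgroup (AddAut (P ℓ)) where
  carrier := {w | wact w f = f}
  zero_mem' := wact_one f
  add_mem' := by
    intro a b ha hb
    show wact (a + b) f = f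
    rw [← wact_wact, hb, ha]
  neg_mem' := by
    intro a ha
    show wact (-a) f = f
    conv_lhs => rw [← ha]
    rw [wact_wact, neg_add_cancel, wact_one]

variable (S : RootDatum ℓ)

lemma sRefl_mem (i : Fin ℓ) : sRefl S i ∈ Wgrp S :=
  AddSubgroup.subset_closure ⟨i, rfl⟩

lemma wact_of_gen_inv (f : R ℓ) (h : ∀ i, wact (sRefl S i) f = f) :
    ∀ w ∈ Wgrp S, wact w f = f := by
  intro w hw
  have : Wgrp S ≤ fixSub f := by
    rw [Wgrp, AddSubgroup.closure_le]
    rintro x ⟨i, rfl⟩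
    exact h i
  exact this hw

lemma sRefl_apply (i : Fin ℓ) (μ : P ℓ) : sRefl S i μ = μ - μ i • S.α i := rfl

lemma chV_inv (T : CharTheory S) (lam : P ℓ) (hl : dominant lam) {w : AddAut (P ℓ)} (hw : w ∈ Wgrp S) :
    wact w (T.chV lam) = T.chV lam :=
  wact_of_gen_inv S (T.chV lam) (T.chV_invariant lam hl) w hw

lemma chV_coeff_w (T : CharTheory S) (lam : P ℓ) (hl : dominant lam) {w : AddAut (P ℓ)} (hw : w ∈ Wgrp S)
    (x : P ℓ) : (T.chV lam).coeff (w x) = (T.chV lam).coeff x := by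
  conv_lhs => rw [← chV_inv S T lam hl hw]
  exact wact_apply w _ x

lemma chV_coeff_orbit (T : CharTheory S) (lam : P ℓ) (hl : dominant lam) {w : AddAut (P ℓ)} (hw : w ∈ Wgrp S) :
    (T.chV lam).coeff (w lam) = 1 := by
  rw [chV_coeff_w S T lam hl hw, T.chV_self lam hl]

lemma rho_dominant : dominant (ρ : P ℓ) := fun _ => by norm_num [ρ]

lemma eps_dominant (i : Fin ℓ) : dominant (Pi.single i 1 : P ℓ) := by
  intro j
  rcases eq_or_ne i j with h | h
  · subst h; simp
  · simp [Pi.single_apply, h.symm]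

lemma domle_of_mem_supp (T : CharTheory S) (lam : P ℓ) (hl : dominant lam) {w : AddAut (P ℓ)}
    (hw : w ∈ Wgrp S) : domle S (w lam) lam := by
  apply T.chV_support_le lam hl
  rw [Finsupp.mem_support_iff, chV_coeff_orbit S T lam hl hw]
  norm_num
end


section
variable {ℓ : ℕ}

/-- Every `w ∈ W` sends the `i`-th standard basis vector into the (finite)
support of `chV ϖᵢ`; since an additive automorphism of `ℤ^ℓ` is determined by
its values on the basis, `W` is finite. -/
lemma W_finite (S : RootDatum ℓ) (T : CharTheory S) :
    (↑(Wgrp S) : Set (AddAut (P ℓ))).Finite := by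
  classical
  set F : AddAut (P ℓ) → (Fin ℓ → P ℓ) := fun w i => w (Pi.single i 1) with hF
  have hinj : Function.Injective F := by
    intro a b hab
    apply AddEquiv.ext
    intro x
    have hx : x = ∑ i : Fin ℓ, x i • (Pi.single i 1 : P ℓ) := by
      have h0 := pi_eq_sum_univ x
      convert h0 using 2 with i
      ext j
      rcases eq_or_ne i j with h | h
      · subst h; simp
      · simp [Pi.single_apply, h, Ne.symm h]
    have ha : a x = ∑ i : Fin ℓ, x i • a (Pi.single i 1) := by
      conv_lhs => rw [hx]
      rw [map_sum]
      exact Finset.sum_congr rfl fun i _ => map_zsmul a _ _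
    have hb : b x = ∑ i : Fin ℓ, x i • b (Pi.single i 1) := by
      conv_lhs => rw [hx]
      rw [map_sum]
      exact Finset.sum_congr rfl fun i _ => map_zsmul b _ _
    rw [ha, hb]
    exact Finset.sum_congr rfl fun i _ => by have := congrFun hab i; simp only [hF] at this; rw [this]
  have himg : F '' ↑(Wgrp S) ⊆ Set.univ.pi (fun i => ↑((T.chV (Pi.single i 1)).coeff.support)) := by
    rintro _ ⟨w, hw, rfl⟩ i -
    simp only [Finset.coe_sort_coe, Finset.mem_coe, Finsupp.mem_support_iff]
    rw [chV_coeff_orbit S T _ (eps_dominant i) hw]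
    norm_num
  exact Set.Finite.of_finite_image
    (Set.Finite.subset (Set.Finite.pi fun i => (Finset.finite_toSet _)) himg)
    (hinj.injOn)
end


section
variable {ℓ : ℕ}

/-- Using the finiteness of `W`, average the standard inner product over `W`
to obtain a `W`-invariant positive definite form; the reflection formula then
shows that the coordinate functionals are pairings against the simple roots,
whence the simple roots are linearly independent over `ℤ`. -/
lemma alpha_indep (S : RootDatum ℓ) (T : CharTheory S)
    (c : Fin ℓ → ℤ) (hc : (∑ i, c i • S.α i) = 0) : ∀ i, c i = 0 := by
  classical
  obtain hWf := W_finite S T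
  set Wfin : Finset (AddAut (P ℓ)) := hWf.toFinset with hWfin
  have memW : ∀ w : AddAut (P ℓ), w ∈ Wfin ↔ w ∈ Wgrp S := by
    intro w; rw [hWfin, Set.Finite.mem_toFinset]; rfl
  set Γ : P ℓ → P ℓ → ℤ := fun x y => ∑ w ∈ Wfin, ∑ p, (w x p) * (w y p) with hΓ
  -- invariance
  have Γ_inv : ∀ u ∈ Wgrp S, ∀ x y, Γ (u x) (u y) = Γ x y := by
    intro u hu x y
    rw [hΓ]
    refine Finset.sum_nbij' (fun w => w + u) (fun w => w + -u) ?_ ?_ ?_ ?_ ?_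
    · intro w hw; rw [memW] at *; exact add_mem hw hu
    · intro w hw; rw [memW] at *; exact add_mem hw (neg_mem hu)
    · intro w hw; simp [add_assoc]
    · intro w hw; simp [add_assoc]
    · intro w hw
      refine Finset.sum_congr rfl fun p _ => ?_
      rw [AddAut.add_apply, AddAut.add_apply]
  -- bilinearity-type expansion
  have Γ_expand : ∀ (x y a : P ℓ) (k l : ℤ),
      Γ (x - k • a) (y - l • a)
        = Γ x y - k * Γ a y - l * Γ x a + k * l * Γ a a := by
    intro x y a k l
    rw [hΓ]
    simp only [map_sub, map_zsmul]
    have step : ∀ w ∈ Wfin, ∑ p : Fin ℓ, (w x - k • w a) p * (w y - l • w a) p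
        = (∑ p : Fin ℓ, w x p * w y p) - k * (∑ p : Fin ℓ, w a p * w y p)
          - l * (∑ p : Fin ℓ, w x p * w a p) + k * l * (∑ p : Fin ℓ, w a p * w a p) := by
      intro w _
      rw [Finset.mul_sum, Finset.mul_sum, Finset.mul_sum,
        ← Finset.sum_sub_distrib, ← Finset.sum_sub_distrib, ← Finset.sum_add_distrib]
      refine Finset.sum_congr rfl fun p _ => ?_
      simp only [Pi.sub_apply, Pi.smul_apply, smul_eq_mul]
      ring
    rw [Finset.sum_congr rfl step]
    rw [Finset.mul_sum, Finset.mul_sum, Finset.mul_sum,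
      ← Finset.sum_sub_distrib, ← Finset.sum_sub_distrib, ← Finset.sum_add_distrib]
  -- the reflection identity
  have hrefl : ∀ (i : Fin ℓ) (x y : P ℓ),
      x i * Γ (S.α i) y + y i * Γ x (S.α i) = x i * y i * Γ (S.α i) (S.α i) := by
    intro i x y
    have h1 := Γ_inv (sRefl S i) (sRefl_mem S i) x y
    rw [sRefl_apply, sRefl_apply, Γ_expand] at h1
    linarith
  set cst : Fin ℓ → ℤ := fun i => Γ (S.α i) (S.α i) - Γ (Pi.single i 1) (S.α i) with hcstdef
  have hpair : ∀ (i : Fin ℓ) (y : P ℓ), Γ (S.α i) y = y i * cst i := by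
    intro i y
    have h := hrefl i (Pi.single i 1) y
    have h1 : (Pi.single i 1 : P ℓ) i = 1 := by simp
    rw [h1] at h
    have h2 : Γ (Pi.single i 1) y * 1 = 1 * Γ (Pi.single i 1) y := by ring
    rw [hcstdef]
    -- h : 1 * Γ (α i) y + y i * Γ (ε i) (α i) = 1 * y i * Γ (α i) (α i)
    ring_nf
    ring_nf at h
    linarith
  have hpos : ∀ i : Fin ℓ, 0 < Γ (S.α i) (S.α i) := by
    intro i
    rw [hΓ]
    apply Finset.sum_pos'
    · intro w _
      exact Finset.sum_nonneg fun p _ => mul_self_nonneg _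
    · refine ⟨0, ?_, ?_⟩
      · rw [memW]; exact zero_mem _
      · refine Finset.sum_pos' (fun p _ => mul_self_nonneg _) ⟨i, Finset.mem_univ i, ?_⟩
        have : (0 : AddAut (P ℓ)) (S.α i) = S.α i := rfl
        rw [this, S.cartan_diag i]
        norm_num
  have hcst : ∀ i : Fin ℓ, 0 < cst i := by
    intro i
    have h := hpair i (S.α i)
    rw [S.cartan_diag i] at h
    have := hpos i
    omega
  have hzero : ∀ y : P ℓ, Γ 0 y = 0 := by
    intro y
    rw [hΓ]
    refine Finset.sum_eq_zero fun w _ => Finset.sum_eq_zero fun p _ => ?_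
    rw [map_zero]
    simp
  have hlin : ∀ y : P ℓ, Γ (∑ i, c i • S.α i) y = ∑ i, c i * Γ (S.α i) y := by
    intro y
    rw [hΓ]
    simp only [map_sum, map_zsmul]
    have inner : ∀ w ∈ Wfin, ∑ p : Fin ℓ, (∑ i, c i • w (S.α i)) p * (w y p)
        = ∑ i, c i * ∑ p : Fin ℓ, w (S.α i) p * w y p := by
      intro w _
      have e1 : ∀ p : Fin ℓ, (∑ i, c i • w (S.α i)) p * (w y p)
          = ∑ i, c i * (w (S.α i) p * w y p) := by
        intro p
        rw [Finset.sum_apply, Finset.sum_mul]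
        refine Finset.sum_congr rfl fun i _ => ?_
        simp only [Pi.smul_apply, smul_eq_mul]
        ring
      rw [Finset.sum_congr rfl (fun p _ => e1 p), Finset.sum_comm]
      exact Finset.sum_congr rfl fun i _ => by rw [Finset.mul_sum]
    rw [Finset.sum_congr rfl inner, Finset.sum_comm]
    refine Finset.sum_congr rfl fun i _ => ?_
    rw [Finset.mul_sum]
  intro p
  have key : (0 : ℤ) = c p * cst p := by
    have h0 : Γ (∑ i, c i • S.α i) (Pi.single p 1) = 0 := by rw [hc, hzero]
    rw [hlin] at h0
    have h1 : ∀ i : Fin ℓ, c i * Γ (S.α i) (Pi.single p 1)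
        = (if i = p then c p * cst p else 0) := by
      intro i
      rw [hpair]
      rcases eq_or_ne i p with h | h
      · subst h; simp
      · simp [Pi.single_apply, h, Ne.symm h]
    rw [Finset.sum_congr rfl (fun i _ => h1 i), Finset.sum_ite_eq'] at h0
    simpa using h0.symm
  have := hcst p
  rcases mul_eq_zero.1 key.symm with h | h
  · exact h
  · omega
end


section
variable {ℓ : ℕ}

lemma domle_add {S : RootDatum ℓ} {a b c d : P ℓ} (h1 : domle S a b) (h2 : domle S c d) :
    domle S (a + c) (b + d) := by
  obtain ⟨u, hu⟩ := h1
  obtain ⟨v, hv⟩ := h2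
  refine ⟨fun i => u i + v i, ?_⟩
  have : b + d - (a + c) = (b - a) + (d - c) := by abel
  rw [this, hu, hv, ← Finset.sum_add_distrib]
  refine Finset.sum_congr rfl fun i _ => ?_
  push_cast
  rw [add_smul]

lemma domle_trans {S : RootDatum ℓ} {a b c : P ℓ} (h1 : domle S a b) (h2 : domle S b c) :
    domle S a c := by
  obtain ⟨u, hu⟩ := h1
  obtain ⟨v, hv⟩ := h2
  refine ⟨fun i => u i + v i, ?_⟩
  have : c - a = (b - a) + (c - b) := by abel
  rw [this, hu, hv, ← Finset.sum_add_distrib]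
  refine Finset.sum_congr rfl fun i _ => ?_
  push_cast
  rw [add_smul]

lemma domle_congr {S : RootDatum ℓ} {a b c d : P ℓ} (h : d - c = b - a) (h1 : domle S a b) :
    domle S c d := by
  obtain ⟨u, hu⟩ := h1
  exact ⟨u, by rw [h, hu]⟩

/-- A double `ℕ`-combination of simple roots is an `ℕ`-combination. -/
lemma cone_sum {S : RootDatum ℓ} {γ : Type*} (s : Finset γ) (k : γ → ℕ) (g : γ → Fin ℓ → ℕ) :
    ∃ d : Fin ℓ → ℕ, ∑ x ∈ s, (k x : ℤ) • (∑ j, (g x j : ℤ) • S.α j) = ∑ j, (d j : ℤ) • S.α j := by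
  classical
  refine ⟨fun j => ∑ x ∈ s, k x * g x j, ?_⟩
  have step : ∀ x ∈ s, (k x : ℤ) • (∑ j, (g x j : ℤ) • S.α j)
      = ∑ j, ((k x * g x j : ℕ) : ℤ) • S.α j := by
    intro x _
    rw [Finset.smul_sum]
    refine Finset.sum_congr rfl fun j _ => ?_
    rw [smul_smul]
    push_cast
    ring_nf
  rw [Finset.sum_congr rfl step, Finset.sum_comm]
  refine Finset.sum_congr rfl fun j _ => ?_
  rw [← Finset.sum_smul]
  congr 1
  push_cast
  ring



variable {ℓ : ℕ}

lemma sigma_cone (S : RootDatum ℓ) {w₀ : AddAut (P ℓ)} (hw₀ : IsLongest S w₀)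
    (c : Fin ℓ → ℕ) :
    ∃ d : Fin ℓ → ℕ, -(w₀ (∑ i, (c i : ℤ) • S.α i)) = ∑ j, (d j : ℤ) • S.α j := by
  classical
  have hσ : ∀ i : Fin ℓ, -(w₀ (S.α i)) ∈ S.Φpos := fun i => hw₀.2 _ (S.simple_mem i)
  have hg : ∀ i : Fin ℓ, ∃ g : Fin ℓ → ℕ, -(w₀ (S.α i)) = ∑ j, (g j : ℤ) • S.α j :=
    fun i => S.pos_in_cone _ (hσ i)
  choose g hgspec using hg
  have expand : -(w₀ (∑ i, (c i : ℤ) • S.α i)) = ∑ i, (c i : ℤ) • (∑ j, (g i j : ℤ) • S.α j) := by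
    rw [map_sum, ← Finset.sum_neg_distrib]
    refine Finset.sum_congr rfl fun i _ => ?_
    rw [map_zsmul, ← smul_neg, hgspec i]
  obtain ⟨d, hd⟩ := cone_sum (S := S) Finset.univ c g
  exact ⟨d, by rw [expand, hd]⟩

lemma w0_reverse (S : RootDatum ℓ) {w₀ : AddAut (P ℓ)} (hw₀ : IsLongest S w₀)
    {a b : P ℓ} (h : domle S a b) : domle S (w₀ b) (w₀ a) := by
  obtain ⟨c, hc⟩ := h
  obtain ⟨d, hd⟩ := sigma_cone S hw₀ c
  refine ⟨d, ?_⟩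
  have h3 : w₀ a - w₀ b = -(w₀ (b - a)) := by rw [map_sub]; abel
  rw [h3, hc]
  exact hd

lemma sigma_mono (S : RootDatum ℓ) {w₀ : AddAut (P ℓ)} (hw₀ : IsLongest S w₀)
    {a b : P ℓ} (h : domle S a b) : domle S (-(w₀ a)) (-(w₀ b)) := by
  obtain ⟨c, hc⟩ := h
  obtain ⟨d, hd⟩ := sigma_cone S hw₀ c
  refine ⟨d, ?_⟩
  have h3 : -(w₀ b) - -(w₀ a) = -(w₀ (b - a)) := by rw [map_sub]; abel
  rw [h3, hc]
  exact hd

lemma sigma_two_rho (S : RootDatum ℓ) {w₀ : AddAut (P ℓ)} (hw₀ : IsLongest S w₀) :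
    -(w₀ ((2 : ℤ) • ρ)) = ((2 : ℤ) • ρ : P ℓ) := by
  classical
  set τ : P ℓ → P ℓ := fun β => -(w₀ β) with hτ
  have hτinj : Function.Injective τ := by
    intro x y hxy
    have : w₀ x = w₀ y := by
      have := congrArg Neg.neg hxy
      simpa [hτ] using this
    exact w₀.injective this
  have himg : S.Φpos.image τ = S.Φpos := by
    apply Finset.eq_of_subset_of_card_le
    · intro x hx
      obtain ⟨β, hβ, rfl⟩ := Finset.mem_image.1 hx
      exact hw₀.2 β hβ
    · rw [Finset.card_image_of_injective _ hτinj]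
  have hsum : ∑ β ∈ S.Φpos, τ β = ∑ β ∈ S.Φpos, β := by
    have h4 : ∑ x ∈ S.Φpos.image τ, x = ∑ x ∈ S.Φpos, τ x :=
      Finset.sum_image (fun x _ y _ h => hτinj h)
    rw [himg] at h4
    exact h4.symm
  have : -(w₀ (∑ β ∈ S.Φpos, β)) = ∑ β ∈ S.Φpos, τ β := by
    rw [map_sum, ← Finset.sum_neg_distrib]
  rw [← S.sum_pos_roots, this, hsum]

/-- If `δ` is dominant then `-(w₀ δ)` is dominant. -/
lemma neg_w0_dominant (S : RootDatum ℓ) (T : CharTheory S) {w₀ : AddAut (P ℓ)}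
    (hw₀ : IsLongest S w₀) {δ : P ℓ} (hδ : dominant δ) : dominant (-(w₀ δ)) := by
  classical
  intro i
  set k : ℤ := (w₀ δ) i with hk
  set x : P ℓ := (sRefl S i) (w₀ δ) with hx
  have hcx : (T.chV δ).coeff x = 1 := by
    rw [hx, chV_coeff_w S T δ hδ (sRefl_mem S i), chV_coeff_orbit S T δ hδ hw₀.1]
  have hinvx : w₀ ((-w₀) x) = x := by
    simp
  have hcz : (T.chV δ).coeff ((-w₀) x) = 1 := by
    rw [chV_coeff_w S T δ hδ (neg_mem hw₀.1), hcx]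
  have hzsupp : (-w₀) x ∈ (T.chV δ).coeff.support := by
    rw [Finsupp.mem_support_iff, hcz]; norm_num
  have hzle : domle S ((-w₀) x) δ := T.chV_support_le δ hδ _ hzsupp
  have hle : domle S (w₀ δ) x := by
    have := w0_reverse S hw₀ hzle
    rwa [hinvx] at this
  obtain ⟨d, hd⟩ := hle
  have hxval : x - w₀ δ = -(k • S.α i) := by
    rw [hx, sRefl_apply, ← hk]
    abel
  have hrel : (∑ j, ((d j : ℤ) + (if j = i then k else 0)) • S.α j) = 0 := by
    have h1 : (∑ j, ((d j : ℤ) + (if j = i then k else 0)) • S.α j)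
        = (∑ j, (d j : ℤ) • S.α j) + ∑ j, (if j = i then k else 0) • S.α j := by
      rw [← Finset.sum_add_distrib]
      exact Finset.sum_congr rfl fun j _ => add_smul _ _ _
    have h2 : (∑ j, (if j = i then k else 0) • S.α j) = k • S.α i := by
      have : ∀ j : Fin ℓ, (if j = i then k else 0) • S.α j
          = (if j = i then k • S.α j else 0) := by
        intro j; split <;> simp
      rw [Finset.sum_congr rfl fun j _ => this j, Finset.sum_ite_eq']
      simp
    rw [h1, h2, ← hd, hxval]
    abel
  have hzero : (d i : ℤ) + k = 0 := by simpa using alpha_indep S T _ hrel i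
  have hni : (-(w₀ δ)) i = -k := by simp [hk]
  rw [hni]
  omega
end


section
variable {ℓ : ℕ}

lemma mul_coeff_nonneg (f g : R ℓ) (hf : ∀ x, 0 ≤ f.coeff x) (hg : ∀ x, 0 ≤ g.coeff x) :
    ∀ x, 0 ≤ (f * g).coeff x := by
  classical
  intro x
  rw [AddMonoidAlgebra.coeff_mul]
  simp only [Finsupp.sum]
  refine Finset.sum_nonneg fun a₁ _ => Finset.sum_nonneg fun a₂ _ => ?_
  split
  · exact mul_nonneg (hf _) (hg _)
  · exact le_refl 0

lemma mul_coeff_pos (f g : R ℓ) (hf : ∀ x, 0 ≤ f.coeff x) (hg : ∀ x, 0 ≤ g.coeff x)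
    {a b : P ℓ} (ha : 0 < f.coeff a) (hb : 0 < g.coeff b) : 0 < (f * g).coeff (a + b) := by
  classical
  rw [AddMonoidAlgebra.coeff_mul]
  simp only [Finsupp.sum]
  have hamem : a ∈ f.coeff.support := Finsupp.mem_support_iff.2 (ne_of_gt ha)
  have hbmem : b ∈ g.coeff.support := Finsupp.mem_support_iff.2 (ne_of_gt hb)
  refine Finset.sum_pos' (fun a₁ _ => Finset.sum_nonneg fun a₂ _ => ?_) ⟨a, hamem, ?_⟩
  · split
    · exact mul_nonneg (hf _) (hg _)
    · exact le_refl 0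
  · refine Finset.sum_pos' (fun a₂ _ => ?_) ⟨b, hbmem, ?_⟩
    · split
      · exact mul_nonneg (hf _) (hg _)
      · exact le_refl 0
    · rw [if_pos rfl]
      exact mul_pos ha hb

lemma chρ_expand (S : RootDatum ℓ) (T : CharTheory S)
    (hchρ : T.chV ρ = e ρ * ∏ β ∈ S.Φpos, (1 + e (-β))) :
    T.chV ρ = ∑ t ∈ S.Φpos.powerset, e (ρ - ∑ β ∈ S.Φpos \ t, β) := by
  classical
  rw [hchρ, Finset.prod_add, Finset.mul_sum]
  refine Finset.sum_congr rfl fun t _ => ?_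
  rw [Finset.prod_const_one, one_mul, prod_e (S.Φpos \ t) (fun β => -β), e_mul]
  congr 1
  rw [Finset.sum_neg_distrib]
  abel



variable {ℓ : ℕ}

lemma chρ_coeff_pos (S : RootDatum ℓ) (T : CharTheory S)
    (hchρ : T.chV ρ = e ρ * ∏ β ∈ S.Φpos, (1 + e (-β)))
    {A : Finset (P ℓ)} (hA : A ⊆ S.Φpos) :
    0 < (T.chV ρ).coeff ((∑ β ∈ A, β) - ρ) := by
  classical
  rw [chρ_expand S T hchρ, AddMonoidAlgebra.coeff_sum, Finsupp.finset_sum_apply]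
  refine Finset.sum_pos' (fun t _ => ?_) ⟨A, Finset.mem_powerset.2 hA, ?_⟩
  · rw [e_apply]
    split
    · norm_num
    · exact le_refl 0
  · rw [e_apply, if_pos]
    · norm_num
    · -- ρ - ∑_{Φpos \ A} β = (∑_A β) - ρ
      have hsd : (∑ β ∈ S.Φpos \ A, β) + ∑ β ∈ A, β = ∑ β ∈ S.Φpos, β :=
        Finset.sum_sdiff hA
      have h2 : (∑ β ∈ S.Φpos, β) = ρ + ρ := by
        rw [S.sum_pos_roots, two_smul]
      funext j
      have := congrFun hsd j
      have h2j := congrFun h2 j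
      simp only [Pi.add_apply, Pi.sub_apply] at *
      omega

/-- Main bound: for `A ⊆ Φ⁺`, `w ∈ W`, `w(∑_A β + ρ) ≤ 3ρ`. -/
lemma eta_le_three_rho (S : RootDatum ℓ) (T : CharTheory S)
    (hchρ : T.chV ρ = e ρ * ∏ β ∈ S.Φpos, (1 + e (-β)))
    {A : Finset (P ℓ)} (hA : A ⊆ S.Φpos) {w : AddAut (P ℓ)} (hw : w ∈ Wgrp S) :
    domle S (w ((∑ β ∈ A, β) + ρ)) (ρ + ρ + ρ) := by
  classical
  set χ : R ℓ := T.chV ρ with hχ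
  set X : R ℓ := χ * (χ * χ) with hX
  have hχn : ∀ x, 0 ≤ χ.coeff x := T.chV_coeff_nonneg ρ
  have hχχn : ∀ x, 0 ≤ (χ * χ).coeff x := mul_coeff_nonneg χ χ hχn hχn
  have hχρ : 0 < χ.coeff ρ := by
    rw [hχ, T.chV_self ρ rho_dominant]; norm_num
  have hXpos : 0 < X.coeff ((∑ β ∈ A, β) + ρ) := by
    have h1 : 0 < (χ * χ).coeff (ρ + ρ) := mul_coeff_pos χ χ hχn hχn hχρ hχρ
    have h2 : 0 < X.coeff (((∑ β ∈ A, β) - ρ) + (ρ + ρ)) :=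
      mul_coeff_pos χ (χ * χ) hχn hχχn (chρ_coeff_pos S T hchρ hA) h1
    have h3 : ((∑ β ∈ A, β) - ρ) + (ρ + ρ) = (∑ β ∈ A, β) + ρ := by abel
    rwa [h3] at h2
  have hXinv : wact w X = X := by
    rw [hX, wact_mul, wact_mul, chV_inv S T ρ rho_dominant hw]
  have hXw : 0 < X.coeff (w ((∑ β ∈ A, β) + ρ)) := by
    have : X.coeff (w ((∑ β ∈ A, β) + ρ)) = X.coeff ((∑ β ∈ A, β) + ρ) := by
      conv_lhs => rw [← hXinv]
      exact wact_apply w X _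
    rwa [this]
  have hmem : w ((∑ β ∈ A, β) + ρ) ∈ X.coeff.support := Finsupp.mem_support_iff.2 (ne_of_gt hXw)
  have hsub := AddMonoidAlgebra.support_coeff_mul_subset χ (χ * χ)
  have hsub2 := AddMonoidAlgebra.support_coeff_mul_subset χ χ
  have h4 := hsub hmem
  rw [Finset.mem_add] at h4
  obtain ⟨a, ha, bc, hbc, habc⟩ := h4
  have h5 := hsub2 hbc
  rw [Finset.mem_add] at h5
  obtain ⟨b, hb, c, hc, hbc'⟩ := h5
  have hda : domle S a ρ := T.chV_support_le ρ rho_dominant a ha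
  have hdb : domle S b ρ := T.chV_support_le ρ rho_dominant b hb
  have hdc : domle S c ρ := T.chV_support_le ρ rho_dominant c hc
  have : domle S (a + (b + c)) (ρ + (ρ + ρ)) := domle_add hda (domle_add hdb hdc)
  have heq : a + (b + c) = w ((∑ β ∈ A, β) + ρ) := by rw [hbc', habc]
  rw [heq] at this
  refine domle_congr ?_ this
  abel

lemma dot_le_two_rho (S : RootDatum ℓ) (T : CharTheory S)
    (hchρ : T.chV ρ = e ρ * ∏ β ∈ S.Φpos, (1 + e (-β)))
    {A : Finset (P ℓ)} (hA : A ⊆ S.Φpos) {w : AddAut (P ℓ)} (hw : w ∈ Wgrp S) :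
    domle S (w ((∑ β ∈ A, β) + ρ) - ρ) ((2 : ℤ) • ρ) := by
  have h := eta_le_three_rho S T hchρ hA hw
  refine domle_congr ?_ h
  rw [two_smul]
  abel
end


section
variable {ℓ : ℕ} {S : RootDatum ℓ}

lemma list_sum_apply' (l : List (R ℓ)) (x : P ℓ) :
    l.sum.coeff x = (l.map (fun f : R ℓ => f.coeff x)).sum := by
  induction l with
  | nil => simp
  | cons a l ih => rw [List.sum_cons, List.map_cons, List.sum_cons, AddMonoidAlgebra.coeff_add, Finsupp.add_apply, ih]

lemma multiset_sum_apply' (s : Multiset (R ℓ)) (x : P ℓ) :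
    s.sum.coeff x = (s.map (fun f : R ℓ => f.coeff x)).sum := by
  induction s using Multiset.induction_on with
  | empty => simp
  | cons a s ih => rw [Multiset.sum_cons, Multiset.map_cons, Multiset.sum_cons, AddMonoidAlgebra.coeff_add, Finsupp.add_apply, ih]

lemma isChar_coeff_nonneg (T : CharTheory S) {h : R ℓ} (hh : IsChar T h) :
    ∀ x, 0 ≤ h.coeff x := by
  obtain ⟨l, hdom, rfl⟩ := hh
  intro x
  rw [list_sum_apply']
  apply List.sum_nonneg
  intro y hy
  rw [List.mem_map] at hy
  obtain ⟨f, hf, rfl⟩ := hy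
  rw [List.mem_map] at hf
  obtain ⟨μ, hμ, rfl⟩ := hf
  exact T.chV_coeff_nonneg μ x

lemma isChar_zero (T : CharTheory S) : IsChar T (0 : R ℓ) :=
  ⟨[], by simp, by simp⟩

lemma isChar_add (T : CharTheory S) {f g : R ℓ} (hf : IsChar T f) (hg : IsChar T g) :
    IsChar T (f + g) := by
  obtain ⟨l₁, h₁, rfl⟩ := hf
  obtain ⟨l₂, h₂, rfl⟩ := hg
  refine ⟨l₁ ++ l₂, ?_, ?_⟩
  · intro μ hμ
    rcases List.mem_append.1 hμ with h | h
    · exact h₁ μ h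
    · exact h₂ μ h
  · rw [List.map_append, List.sum_append]

lemma isChar_nsmul (T : CharTheory S) (n : ℕ) {lam : P ℓ} (hl : dominant lam) :
    IsChar T ((n : ℤ) • T.chV lam) := by
  refine ⟨List.replicate n lam, ?_, ?_⟩
  · intro μ hμ
    rw [List.eq_of_mem_replicate hμ]
    exact hl
  · rw [List.map_replicate, List.sum_replicate, natCast_zsmul]

lemma isChar_finsum (T : CharTheory S) {ι : Type*} (s : Finset ι) (f : ι → R ℓ)
    (h : ∀ i ∈ s, IsChar T (f i)) : IsChar T (∑ i ∈ s, f i) := by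
  classical
  induction s using Finset.cons_induction with
  | empty => simpa using isChar_zero T
  | cons a s ha ih =>
      rw [Finset.sum_cons]
      exact isChar_add T (h a (Finset.mem_cons_self a s))
        (ih fun i hi => h i (Finset.mem_cons_of_mem hi))
end


/-- Let `G` be an arbitrary simple complex algebraic group
(not necessarily simply-connected).  Every dominant integral weight `λ` with
`V(λ) ⊂ H•(G/B, ∧•𝒯_{G/B})` satisfies `λ ≤ 2ρ` and hence lies in the root
lattice `Q`, so `V(λ)` is a representation of `G`; consequently, if Kostant's
conjecture holds for the simply-connected cover, then for `λ ∈ P⁺` one has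
`V(λ) ⊂ H•(G/B, ∧•𝒯_{G/B})` if and only if `λ ≤ 2ρ`, with multiplicity at
least `m λ`.

The hypotheses are as in the main theorem: `HT` is the character of
`H•(G/B, ∧•𝒯_{G/B})`; `hgrT`, `hBWB`, `hsurj` are the Borel–Weil–Bott
constraints on the cohomology of the graded line bundles of
`∧•𝒯_{G/B} = 𝓛(∧•𝔲)`; `hembed` is the embedding
`V(ρ) ⊗ V(ρ) ↪ H•(G/B, ∧•𝒯_{G/B})` (which makes sense for the
simply-connected cover); `m`, `msupp` give the decomposition of
`V(ρ) ⊗ V(ρ)`; and `hKostant` is Kostant's conjecture for the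
simply-connected cover. -/
theorem occurs_in_hochschild_cohomology_iff_le_two_rho_of_simple
    {ℓ : ℕ} (S : RootDatum ℓ) (T : CharTheory S)
    (w₀ : AddAut (P ℓ)) (hw₀ : IsLongest S w₀)
    (hchρ : T.chV ρ = e ρ * ∏ β ∈ S.Φpos, (1 + e (-β)))
    (grT : Multiset (P ℓ))
    (hgrT : grT = S.Φpos.powerset.val.map (fun A => -(∑ β ∈ A, β)))
    (Hgr : P ℓ → R ℓ)
    (hBWB : ∀ ξ ∈ grT, Hgr ξ = 0 ∨ ∃ w ∈ Wgrp S, dominant (dot w (-ξ)) ∧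
      Hgr ξ = T.chV (-(w₀ (dot w (-ξ)))))
    (HT : R ℓ)
    (hsurj : ∃ h : R ℓ, IsChar T h ∧ (grT.map Hgr).sum = HT + h)
    (hembed : ∃ h : R ℓ, IsChar T h ∧ HT = T.chV ρ * T.chV ρ + h)
    (m : P ℓ → ℕ) (msupp : Finset (P ℓ))
    (hm_dom : ∀ ν ∈ msupp, dominant ν)
    (hm_out : ∀ ν ∉ msupp, m ν = 0)
    (hdecomp : T.chV ρ * T.chV ρ = ∑ ν ∈ msupp, (m ν : ℤ) • T.chV ν)
    (hKostant : ∀ lam : P ℓ, dominant lam →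
      (0 < m lam ↔ domle S lam ((2 : ℤ) • ρ)))
    (lam : P ℓ) (hlam : dominant lam) :
    -- every irreducible constituent of `H•(G/B, ∧•𝒯_{G/B})` has highest
    -- weight `≤ 2ρ`, hence lying in the root lattice `Q`, so it is a
    -- representation of `G` even when `G` is not simply connected:
    (Occurs T lam HT →
      domle S lam ((2 : ℤ) • ρ) ∧ ∃ c : Fin ℓ → ℤ, lam = ∑ i, c i • S.α i) ∧
    -- consequently, assuming Kostant's conjecture:
    (Occurs T lam HT ↔ domle S lam ((2 : ℤ) • ρ)) ∧
    (domle S lam ((2 : ℤ) • ρ) → OccursWithMult T (m lam) lam HT) := by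
  classical
  -- ### Key implication: any occurring `lam` satisfies `lam ≤ 2ρ`.
  have key : Occurs T lam HT → domle S lam ((2 : ℤ) • ρ) := by
    rintro ⟨h₀, hch₀, hHT0⟩
    obtain ⟨h₁, hch₁, hsum⟩ := hsurj
    -- the coefficient of `lam` in `HT` is at least 1
    have hHTlam : 1 ≤ HT.coeff lam := by
      rw [hHT0, AddMonoidAlgebra.coeff_add, Finsupp.add_apply, AddMonoidAlgebra.coeff_smul, Finsupp.smul_apply, T.chV_self lam hlam]
      have := isChar_coeff_nonneg T hch₀ lam
      simp only [Nat.cast_one, smul_eq_mul, mul_one]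
      omega
    -- hence the coefficient of `lam` in the Borel-Weil-Bott sum is positive
    have hsum_lam : 1 ≤ ((grT.map Hgr).sum).coeff lam := by
      rw [hsum, AddMonoidAlgebra.coeff_add, Finsupp.add_apply]
      have := isChar_coeff_nonneg T hch₁ lam
      omega
    -- extract a term with nonzero coefficient at `lam`
    have hex : ∃ ξ ∈ grT, (Hgr ξ).coeff lam ≠ 0 := by
      by_contra hcon
      push_neg at hcon
      have : ((grT.map Hgr).sum).coeff lam = 0 := by
        rw [multiset_sum_apply']
        apply Multiset.sum_eq_zero
        intro x hx
        rw [Multiset.map_map, Multiset.mem_map] at hx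
        obtain ⟨ξ, hξ, rfl⟩ := hx
        exact hcon ξ hξ
      omega
    obtain ⟨ξ, hξmem, hξne⟩ := hex
    -- Borel-Weil-Bott: the term is the character of some `V(ν)`, `ν = -(w₀ δ)`
    rcases hBWB ξ hξmem with h0 | ⟨w, hwW, hδdom, hHgr⟩
    · rw [h0] at hξne; simp at hξne
    -- `ξ = -(∑_{β ∈ A} β)` for some `A ⊆ Φ⁺`
    have hA : ∃ A : Finset (P ℓ), A ⊆ S.Φpos ∧ ξ = -(∑ β ∈ A, β) := by
      rw [hgrT, Multiset.mem_map] at hξmem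
      obtain ⟨A, hAmem, rfl⟩ := hξmem
      exact ⟨A, Finset.mem_powerset.1 (Finset.mem_val ▸ hAmem), rfl⟩
    obtain ⟨A, hAsub, hξval⟩ := hA
    set δ : P ℓ := dot w (-ξ) with hδ
    -- `δ ≤ 2ρ`
    have hδle : domle S δ ((2 : ℤ) • ρ) := by
      have : δ = w ((∑ β ∈ A, β) + ρ) - ρ := by
        rw [hδ, dot, hξval, neg_neg]
      rw [this]
      exact dot_le_two_rho S T hchρ hAsub hwW
    -- `ν := -(w₀ δ)` is dominant and `ν ≤ 2ρ`
    set ν : P ℓ := -(w₀ δ) with hν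
    have hνdom : dominant ν := neg_w0_dominant S T hw₀ hδdom
    have hνle : domle S ν ((2 : ℤ) • ρ) := by
      have := sigma_mono S hw₀ hδle
      rwa [sigma_two_rho S hw₀] at this
    -- `lam` is a weight of `V(ν)`, hence `lam ≤ ν ≤ 2ρ`
    have hlamsupp : lam ∈ (T.chV ν).coeff.support := by
      rw [Finsupp.mem_support_iff]
      rw [hHgr] at hξne
      exact hξne
    exact domle_trans (T.chV_support_le ν hνdom lam hlamsupp) hνle
  -- ### `2ρ` is in the root lattice
  have hspan : ∀ μ : P ℓ, domle S μ ((2 : ℤ) • ρ) → ∃ c : Fin ℓ → ℤ, μ = ∑ i, c i • S.α i := by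
    intro μ ⟨c, hc⟩
    have hg : ∀ β : P ℓ, ∃ g : Fin ℓ → ℕ, β ∈ S.Φpos → β = ∑ j, (g j : ℤ) • S.α j := by
      intro β
      by_cases hβ : β ∈ S.Φpos
      · obtain ⟨g, hg⟩ := S.pos_in_cone β hβ
        exact ⟨g, fun _ => hg⟩
      · exact ⟨0, fun h => absurd h hβ⟩
    choose g hgspec using hg
    obtain ⟨d, hd⟩ := cone_sum (S := S) S.Φpos (fun _ => 1) g
    have h2ρ : ((2 : ℤ) • ρ : P ℓ) = ∑ j, (d j : ℤ) • S.α j := by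
      rw [← S.sum_pos_roots, ← hd]
      refine Finset.sum_congr rfl fun β hβ => ?_
      rw [Nat.cast_one, one_smul]
      exact hgspec β hβ
    refine ⟨fun j => (d j : ℤ) - (c j : ℤ), ?_⟩
    have : μ = (2 : ℤ) • ρ - ((2 : ℤ) • ρ - μ) := by abel
    rw [this, hc, h2ρ, ← Finset.sum_sub_distrib]
    exact Finset.sum_congr rfl fun j _ => (sub_smul _ _ _).symm
  -- ### Part 3
  have part3 : domle S lam ((2 : ℤ) • ρ) → OccursWithMult T (m lam) lam HT := by
    intro hle
    obtain ⟨h₂, hch₂, hHT⟩ := hembed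
    have hm : 0 < m lam := (hKostant lam hlam).2 hle
    have hmem : lam ∈ msupp := by
      by_contra hout
      rw [hm_out lam hout] at hm
      exact lt_irrefl 0 hm
    have hsplit : T.chV ρ * T.chV ρ
        = (m lam : ℤ) • T.chV lam + ∑ ν ∈ msupp.erase lam, (m ν : ℤ) • T.chV ν := by
      rw [hdecomp, ← Finset.add_sum_erase _ _ hmem]
    refine ⟨(∑ ν ∈ msupp.erase lam, (m ν : ℤ) • T.chV ν) + h₂, ?_, ?_⟩
    · refine isChar_add T ?_ hch₂
      refine isChar_finsum T _ _ fun ν hν => ?_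
      exact isChar_nsmul T (m ν) (hm_dom ν (Finset.mem_of_mem_erase hν))
    · rw [hHT, hsplit]
      abel
  refine ⟨fun hOc => ⟨key hOc, hspan lam (key hOc)⟩, ⟨fun hOc => key hOc, ?_⟩, part3⟩
  -- ### Part 2, backward direction
  intro hle
  obtain ⟨h, hch, heq⟩ := part3 hle
  have hm : 0 < m lam := (hKostant lam hlam).2 hle
  obtain ⟨n, hn⟩ : ∃ n : ℕ, m lam = n + 1 := ⟨m lam - 1, by omega⟩
  refine ⟨(n : ℤ) • T.chV lam + h, isChar_add T (isChar_nsmul T n hlam) hch, ?_⟩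
  rw [heq, hn]
  push_cast
  rw [add_smul]
  simp only [Nat.cast_one, one_smul]
  abel


end KostantHH
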